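/- Under the setup of the selective code generation problem, for any α, ε_E ∈ (0,1) and any selective generator S with P{S(X) ≠ IDK} > 0: R_α(S) ≤ ε_E + R_{α,ε_E}(S), where R_α(S) = P{S(X) ∉ E_α(Y) | S(X) ≠ IDK} is the risk with respect to the true α-entailment set and R_{α,ε_E}(S) = P{S(X) ∉ Ê_{α,ε_E}(Y) | S(X) ≠ IDK} is the risk with respect to the estimated entailment set. -/
import Mathlib


open MeasureTheory ProbabilityTheory Set
open scoped ENNReal

/-- Lemma 1 (main lemma): R_α(S) ≤ ε_E + R_{α,ε_E}(S). -/
theorem fdr_ce_bound {Ω₁ Ω₂ 𝒳 𝒴 : Type*}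
    [MeasurableSpace Ω₁] [MeasurableSpace Ω₂]
    (μ₁ : Measure Ω₁) (μ₂ : Measure Ω₂)
    [IsProbabilityMeasure μ₁] [IsProbabilityMeasure μ₂]
    (X : Ω₁ → 𝒳) (Y : Ω₁ → 𝒴) (G : 𝒳 → 𝒴) (S : 𝒳 → Option 𝒴)
    (hS : ∀ x, S x = none ∨ S x = some (G x))
    (α ε : ℝ) (hα : α ∈ Set.Ioo (0 : ℝ) 1) (hε : ε ∈ Set.Ioo (0 : ℝ) 1)
    (Eα : 𝒴 → Set 𝒴) (Ehat : 𝒴 → Ω₂ → Set 𝒴)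
    (hpoint : ∀ (y yb : 𝒴), yb ∉ Eα y → μ₂ {ω₂ | yb ∈ Ehat y ω₂} ≤ ENNReal.ofReal ε)
    (C : Set (Ω₁ × Ω₂)) (hC : C = {ω | S (X ω.1) ≠ none})
    (hpos : 0 < (μ₁.prod μ₂) C) :
    (μ₁.prod μ₂)[|C] {ω | G (X ω.1) ∉ Eα (Y ω.1)}
      ≤ ENNReal.ofReal ε
        + (μ₁.prod μ₂)[|C] {ω | G (X ω.1) ∉ Ehat (Y ω.1) ω.2} := by
  obtain ⟨hε0, hε1⟩ := hε
  set μ : Measure (Ω₁ × Ω₂) := μ₁.prod μ₂ with hμ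
  set ε' : ℝ≥0∞ := ENNReal.ofReal ε with hε'
  have hε'le : ε' ≤ 1 := ENNReal.ofReal_le_one.2 hε1.le
  set C₁ : Set Ω₁ := {x | S (X x) ≠ none} with hC₁
  have hCprod : C = C₁ ×ˢ (univ : Set Ω₂) := by
    rw [hC]; ext ω; simp [hC₁, Set.mem_prod]
  set ν : Measure (Ω₁ × Ω₂) := μ.restrict C with hν
  set E : Set (Ω₁ × Ω₂) := {ω | G (X ω.1) ∉ Ehat (Y ω.1) ω.2} with hE
  set D : Set (Ω₁ × Ω₂) := {ω | G (X ω.1) ∉ Eα (Y ω.1)} with hD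
  set B : Set (Ω₁ × Ω₂) := toMeasurable ν E with hB
  have hBmeas : MeasurableSet B := measurableSet_toMeasurable ν E
  have hEB : E ⊆ B := subset_toMeasurable ν E
  have hνBE : ν B = ν E := measure_toMeasurable E
  set h : Ω₁ → ℝ≥0∞ := fun x => μ₂ (Prod.mk x ⁻¹' B) with hh
  have hhmeas : Measurable h := measurable_measure_prodMk_left hBmeas
  set M : Set Ω₁ := {x | 1 - ε' ≤ h x} with hM
  have hMmeas : MeasurableSet M := hhmeas measurableSet_Ici
  -- Claim 1 : D ⊆ M ×ˢ univ
  have hDM : D ⊆ M ×ˢ (univ : Set Ω₂) := by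
    rintro ⟨x, y⟩ hx
    refine ⟨?_, mem_univ _⟩
    set U : Set Ω₂ := {ω₂ | G (X x) ∉ Ehat (Y x) ω₂} with hU
    have hUB : U ⊆ Prod.mk x ⁻¹' B := fun ω₂ hω₂ => hEB hω₂
    have hcompl : μ₂ Uᶜ ≤ ε' := by
      refine le_trans (measure_mono ?_) (hpoint (Y x) (G (X x)) hx)
      intro z hz
      simpa [hU] using hz
    have h1 : (1 : ℝ≥0∞) ≤ h x + ε' := by
      have : (1 : ℝ≥0∞) = μ₂ (U ∪ Uᶜ) := by rw [union_compl_self, measure_univ]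
      rw [this]
      exact le_trans (measure_union_le U Uᶜ)
        (add_le_add (measure_mono hUB) hcompl)
    exact tsub_le_iff_right.2 h1
  -- measurable hulls
  set ρ : Measure Ω₁ := μ₁.withDensity h with hρ
  set Cm : Set Ω₁ := toMeasurable μ₁ C₁ ∩ toMeasurable ρ C₁ with hCm
  have hCmMeas : MeasurableSet Cm :=
    (measurableSet_toMeasurable μ₁ C₁).inter (measurableSet_toMeasurable ρ C₁)
  have hCsub : C₁ ⊆ Cm :=
    subset_inter (subset_toMeasurable μ₁ C₁) (subset_toMeasurable ρ C₁)
  -- step 1 : ν D ≤ μ₁ (M ∩ Cm)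
  have step1 : ν D ≤ μ₁ (M ∩ Cm) := by
    calc ν D ≤ ν (M ×ˢ (univ : Set Ω₂)) := measure_mono hDM
      _ = μ ((M ×ˢ (univ : Set Ω₂)) ∩ C) :=
          Measure.restrict_apply (hMmeas.prod MeasurableSet.univ)
      _ = μ ((M ∩ C₁) ×ˢ (univ : Set Ω₂)) := by
          rw [hCprod, prod_inter_prod, inter_univ]
      _ ≤ μ ((M ∩ Cm) ×ˢ (univ : Set Ω₂)) :=
          measure_mono (prod_mono_left (inter_subset_inter_right M hCsub))
      _ = μ₁ (M ∩ Cm) * μ₂ univ := Measure.prod_prod _ _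
      _ = μ₁ (M ∩ Cm) := by rw [measure_univ, mul_one]
  -- step 2 : (1 - ε') * μ₁ (M ∩ Cm) ≤ ρ Cm
  have step2 : (1 - ε') * μ₁ (M ∩ Cm) ≤ ρ Cm := by
    have e1 : ρ Cm = ∫⁻ x in Cm, h x ∂μ₁ := withDensity_apply h hCmMeas
    have e2 : ∫⁻ x in M ∩ Cm, h x ∂μ₁ ≤ ∫⁻ x in Cm, h x ∂μ₁ :=
      lintegral_mono' (Measure.restrict_mono inter_subset_right le_rfl) le_rfl
    have e3 : ∫⁻ x in M ∩ Cm, (1 - ε') ∂μ₁ ≤ ∫⁻ x in M ∩ Cm, h x ∂μ₁ :=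
      setLIntegral_mono hhmeas (fun x hx => hx.1)
    have e4 : ∫⁻ _ in M ∩ Cm, (1 - ε') ∂μ₁ = (1 - ε') * μ₁ (M ∩ Cm) :=
      setLIntegral_const _ _
    rw [e1, ← e4]
    exact le_trans e3 e2
  -- step 3 : ρ Cm ≤ ν E
  have step3 : ρ Cm ≤ ν E := by
    set W : Set (Ω₁ × Ω₂) := toMeasurable μ (B ∩ C) with hW
    have hWmeas : MeasurableSet W := measurableSet_toMeasurable μ (B ∩ C)
    have hBCW : B ∩ C ⊆ W := subset_toMeasurable μ (B ∩ C)
    have hWeq : μ W = μ (B ∩ C) := measure_toMeasurable (B ∩ C)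
    set g : Ω₁ → ℝ≥0∞ := fun x => μ₂ (Prod.mk x ⁻¹' W) with hg
    have hgmeas : Measurable g := measurable_measure_prodMk_left hWmeas
    set A : Set Ω₁ := {x | h x ≤ g x} with hA
    have hAmeas : MeasurableSet A := measurableSet_le hhmeas hgmeas
    have hC₁A : C₁ ⊆ A := by
      intro x hx
      refine measure_mono (fun z hz => ?_)
      exact hBCW ⟨hz, by rw [hCprod]; exact ⟨hx, mem_univ _⟩⟩
    have h1 : ρ C₁ ≤ ρ A := measure_mono hC₁A
    have h2 : ρ A = ∫⁻ x in A, h x ∂μ₁ := withDensity_apply h hAmeas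
    have h3 : ∫⁻ x in A, h x ∂μ₁ ≤ ∫⁻ x in A, g x ∂μ₁ :=
      setLIntegral_mono hgmeas (fun x hx => hx)
    have h4 : ∫⁻ x in A, g x ∂μ₁ ≤ ∫⁻ x, g x ∂μ₁ := setLIntegral_le_lintegral _ _
    have h5 : (∫⁻ x, g x ∂μ₁) = μ W := (Measure.prod_apply hWmeas).symm
    have h6 : μ (B ∩ C) = ν E := by
      rw [← hνBE, hν, Measure.restrict_apply hBmeas]
    calc ρ Cm ≤ ρ (toMeasurable ρ C₁) := measure_mono inter_subset_right
      _ = ρ C₁ := measure_toMeasurable C₁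
      _ ≤ ρ A := h1
      _ ≤ μ W := by rw [h2]; exact le_trans h3 (le_trans h4 (le_of_eq h5))
      _ = ν E := by rw [hWeq, h6]
  -- step 4 : μ₁ (M ∩ Cm) ≤ μ C
  have step4 : μ₁ (M ∩ Cm) ≤ μ C := by
    set W : Set (Ω₁ × Ω₂) := toMeasurable μ C with hW
    have hWmeas : MeasurableSet W := measurableSet_toMeasurable μ C
    have hCW : C ⊆ W := subset_toMeasurable μ C
    have hWeq : μ W = μ C := measure_toMeasurable C
    set g : Ω₁ → ℝ≥0∞ := fun x => μ₂ (Prod.mk x ⁻¹' W) with hg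
    have hgmeas : Measurable g := measurable_measure_prodMk_left hWmeas
    set A : Set Ω₁ := {x | 1 ≤ g x} with hA
    have hAmeas : MeasurableSet A := hgmeas measurableSet_Ici
    have hC₁A : C₁ ⊆ A := by
      intro x hx
      have : (univ : Set Ω₂) ⊆ Prod.mk x ⁻¹' W := by
        intro z _
        exact hCW (by rw [hCprod]; exact ⟨hx, mem_univ _⟩)
      calc (1 : ℝ≥0∞) = μ₂ univ := measure_univ.symm
        _ ≤ g x := measure_mono this
    calc μ₁ (M ∩ Cm) ≤ μ₁ Cm := measure_mono inter_subset_right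
      _ ≤ μ₁ (toMeasurable μ₁ C₁) := measure_mono inter_subset_left
      _ = μ₁ C₁ := measure_toMeasurable C₁
      _ ≤ μ₁ A := measure_mono hC₁A
      _ = ∫⁻ _ in A, 1 ∂μ₁ := by rw [setLIntegral_const, one_mul]
      _ ≤ ∫⁻ x in A, g x ∂μ₁ := setLIntegral_mono hgmeas (fun x hx => hx)
      _ ≤ ∫⁻ x, g x ∂μ₁ := setLIntegral_le_lintegral _ _
      _ = μ W := (Measure.prod_apply hWmeas).symm
      _ = μ C := hWeq
  -- combine : ν D ≤ ν E + ε' * μ C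
  have key : ν D ≤ ν E + ε' * μ C := by
    have split : μ₁ (M ∩ Cm) = (1 - ε') * μ₁ (M ∩ Cm) + ε' * μ₁ (M ∩ Cm) := by
      rw [← add_mul, tsub_add_cancel_of_le hε'le, one_mul]
    calc ν D ≤ μ₁ (M ∩ Cm) := step1
      _ = (1 - ε') * μ₁ (M ∩ Cm) + ε' * μ₁ (M ∩ Cm) := split
      _ ≤ ν E + ε' * μ C :=
          add_le_add (le_trans step2 step3) (mul_le_mul_right step4 ε')
  -- conclude
  have hcond : ∀ s : Set (Ω₁ × Ω₂), μ[|C] s = (μ C)⁻¹ * ν s := by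
    intro s
    rw [ProbabilityTheory.cond, Measure.smul_apply, smul_eq_mul]
  have hCne : μ C ≠ 0 := ne_of_gt hpos
  have hCtop : μ C ≠ ⊤ := measure_ne_top μ C
  rw [hcond D, hcond E]
  calc (μ C)⁻¹ * ν D ≤ (μ C)⁻¹ * (ν E + ε' * μ C) := mul_le_mul_right key _
    _ = (μ C)⁻¹ * ν E + (μ C)⁻¹ * (ε' * μ C) := mul_add _ _ _
    _ = (μ C)⁻¹ * ν E + ε' * ((μ C)⁻¹ * μ C) := by ring_nf
    _ = (μ C)⁻¹ * ν E + ε' := by rw [ENNReal.inv_mul_cancel hCne hCtop, mul_one]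
    _ = ε' + (μ C)⁻¹ * ν E := add_comm _ _
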